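/- The planar quadratic system x' = x(2x − 5y), y' = y(y − 4x) has g₃ = −4xy²(x − y)³ as a first integral. -/

import Mathlib

theorem first_integral_q236 (x y : ℂ → ℂ) (t : ℂ)
    (hx : HasDerivAt x (x t * (2 * x t - 5 * y t)) t)
    (hy : HasDerivAt y (y t * (y t - 4 * x t)) t) :
    HasDerivAt (fun s => -4 * x s * (y s) ^ 2 * (x s - y s) ^ 3) 0 t := by
  have h := ((hx.const_mul (-4)).mul (hy.pow 2)).mul ((hx.sub hy).pow 3)
  convert h using 1
  · rfl
  · rfl
  · funext s; simp only [Pi.mul_apply, Pi.pow_apply, Pi.sub_apply]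
  · simp only [Pi.mul_apply, Pi.pow_apply, Pi.sub_apply]; push_cast; ring
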